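/- Let d ∈ {1,...,9} and let i be a positive integer whose decimal leading digit is d, with k = min{m ∈ ℕ : d·10^m > i}. Then the number of integers in {1,...,i} whose decimal leading digit equals d is (10^{k-1} − 1)/9 + i − d·10^{k-1} + 1. -/

import Mathlib

open Finset

/-- The leading (first) decimal digit of a positive integer. -/
def leadingDigit (n : ℕ) : ℕ := n / 10 ^ (Nat.log 10 n)

/-- The number of integers in {1,...,i} whose decimal leading digit equals d. -/
def ldCount (d i : ℕ) : ℕ := ((Finset.Icc 1 i).filter (fun j => leadingDigit j = d)).card

/-- Probability that the leading digit is d when i is uniform on {1,...,n} and j uniform on {1,...,i}. -/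
noncomputable def P (d n : ℕ) : ℝ := (1 / (n : ℝ)) * ∑ i ∈ Finset.Icc 1 n, (ldCount d i : ℝ) / i

lemma nine_mul_geom (L : ℕ) : 9 * ∑ m ∈ Finset.range L, 10 ^ m = 10 ^ L - 1 := by
  induction L with
  | zero => simp
  | succ n ih =>
    rw [Finset.sum_range_succ, Nat.mul_add, ih]
    have : 1 ≤ 10 ^ n := Nat.one_le_two_pow.trans (Nat.pow_le_pow_left (by norm_num) n)
    rw [pow_succ]; omega

theorem ldCount_of_leading_eq (d i k : ℕ) (hd : d ∈ Finset.Icc 1 9) (hi : 1 ≤ i)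
    (hlead : leadingDigit i = d)
    (hk : IsLeast {m : ℕ | d * 10 ^ m > i} k) :
    ldCount d i = (10 ^ (k - 1) - 1) / 9 + i - d * 10 ^ (k - 1) + 1 := by
  simp only [Finset.mem_Icc] at hd
  obtain ⟨hd1, hd9⟩ := hd
  set L := Nat.log 10 i with hL
  have hpL : (0:ℕ) < 10 ^ L := Nat.pow_pos (by norm_num)
  have hle : d * 10 ^ L ≤ i := by
    rw [← hlead, leadingDigit]; exact Nat.div_mul_le_self _ _
  have hlt : i < (d + 1) * 10 ^ L := by
    have hd' : i / 10 ^ L = d := hlead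
    calc i < 10 ^ L * (i / 10 ^ L) + 10 ^ L := by
          have h1 := Nat.div_add_mod i (10 ^ L)
          have h2 := Nat.mod_lt i hpL
          omega
      _ = (d + 1) * 10 ^ L := by rw [hd']; ring
  have hkL : k = L + 1 := by
    obtain ⟨hk1, hk2⟩ := hk
    have hub : k ≤ L + 1 := hk2 (by
      simp only [Set.mem_setOf_eq]
      calc i < 10 ^ (L + 1) := Nat.lt_pow_succ_log_self (by norm_num) i
        _ ≤ d * 10 ^ (L + 1) := Nat.le_mul_of_pos_left _ hd1)
    have hlb : L < k := by
      by_contra h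
      push_neg at h
      have : d * 10 ^ k ≤ d * 10 ^ L := Nat.mul_le_mul_left _ (Nat.pow_le_pow_right (by norm_num) h)
      simp only [Set.mem_setOf_eq, gt_iff_lt] at hk1
      omega
    omega
  have key : (Finset.Icc 1 i).filter (fun j => leadingDigit j = d)
      = (Finset.range (L + 1)).biUnion
        (fun m => Finset.Icc (d * 10 ^ m) (min ((d + 1) * 10 ^ m - 1) i)) := by
    ext j
    simp only [Finset.mem_filter, Finset.mem_Icc, Finset.mem_biUnion, Finset.mem_range,
      le_min_iff, Nat.lt_succ_iff]
    constructor
    · rintro ⟨⟨hj1, hji⟩, hjd⟩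
      have hpj : (0:ℕ) < 10 ^ Nat.log 10 j := Nat.pow_pos (by norm_num)
      have hjub : j < (d + 1) * 10 ^ Nat.log 10 j := by
        have hd' : j / 10 ^ Nat.log 10 j = d := hjd
        calc j < 10 ^ Nat.log 10 j * (j / 10 ^ Nat.log 10 j) + 10 ^ Nat.log 10 j := by
              have h1 := Nat.div_add_mod j (10 ^ Nat.log 10 j)
              have h2 := Nat.mod_lt j hpj
              omega
          _ = (d + 1) * 10 ^ Nat.log 10 j := by rw [hd']; ring
      refine ⟨Nat.log 10 j, Nat.log_mono_right hji, ?_, ?_, hji⟩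
      · rw [← hjd, leadingDigit]; exact Nat.div_mul_le_self _ _
      · omega
    · rintro ⟨m, hmL, hjl, hju, hji⟩
      have hpm : (0:ℕ) < 10 ^ m := Nat.pow_pos (by norm_num)
      have hlog : Nat.log 10 j = m := by
        apply Nat.log_eq_of_pow_le_of_lt_pow
        · calc (10:ℕ) ^ m = 1 * 10 ^ m := (one_mul _).symm
            _ ≤ d * 10 ^ m := Nat.mul_le_mul_right _ hd1
            _ ≤ j := hjl
        · calc j ≤ (d + 1) * 10 ^ m - 1 := hju
            _ < (d + 1) * 10 ^ m := by
                have : (0:ℕ) < (d+1) * 10 ^ m := Nat.mul_pos (by omega) hpm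
                omega
            _ ≤ 10 * 10 ^ m := Nat.mul_le_mul_right _ (by omega)
            _ = 10 ^ (m + 1) := by ring
      refine ⟨⟨?_, hji⟩, ?_⟩
      · calc 1 ≤ d * 10 ^ m := Nat.mul_pos hd1 hpm
          _ ≤ j := hjl
      · rw [leadingDigit, hlog]
        apply Nat.div_eq_of_lt_le hjl
        have : (0:ℕ) < (d+1) * 10 ^ m := Nat.mul_pos (by omega) hpm
        omega
  have hdisj : ∀ x ∈ Finset.range (L+1), ∀ y ∈ Finset.range (L+1), x ≠ y →
      Disjoint (Finset.Icc (d * 10 ^ x) (min ((d + 1) * 10 ^ x - 1) i))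
        (Finset.Icc (d * 10 ^ y) (min ((d + 1) * 10 ^ y - 1) i)) := by
    intro x _ y _ hxy
    rw [Finset.disjoint_left]
    intro j hjx hjy
    simp only [Finset.mem_Icc, le_min_iff] at hjx hjy
    have aux : ∀ a b : ℕ, a < b → d * 10 ^ a ≤ j → j ≤ (d+1) * 10 ^ a - 1 →
        d * 10 ^ b ≤ j → False := by
      intro a b hab ha1 ha2 hb
      have hord : (d + 1) * 10 ^ a ≤ d * 10 ^ b := by
        calc (d + 1) * 10 ^ a ≤ 10 * 10 ^ a := Nat.mul_le_mul_right _ (by omega)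
          _ = 10 ^ (a + 1) := by ring
          _ ≤ 10 ^ b := Nat.pow_le_pow_right (by norm_num) hab
          _ = 1 * 10 ^ b := (one_mul _).symm
          _ ≤ d * 10 ^ b := Nat.mul_le_mul_right _ hd1
      have hpa : (0:ℕ) < (d + 1) * 10 ^ a := Nat.mul_pos (by omega) (Nat.pow_pos (by norm_num))
      omega
    rcases Nat.lt_or_ge x y with h | h
    · exact aux x y h hjx.1 hjx.2.1 hjy.1
    · exact aux y x (by omega) hjy.1 hjy.2.1 hjx.1
  rw [ldCount, key, Finset.card_biUnion hdisj, Finset.sum_range_succ]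
  have hmid : ∀ m ∈ Finset.range L,
      (Finset.Icc (d * 10 ^ m) (min ((d + 1) * 10 ^ m - 1) i)).card = 10 ^ m := by
    intro m hm
    rw [Finset.mem_range] at hm
    have hpm : (0:ℕ) < 10 ^ m := Nat.pow_pos (by norm_num)
    have hles : (d + 1) * 10 ^ m - 1 ≤ i := by
      have : (d + 1) * 10 ^ m ≤ d * 10 ^ L := by
        calc (d + 1) * 10 ^ m ≤ 10 * 10 ^ m := Nat.mul_le_mul_right _ (by omega)
          _ = 10 ^ (m + 1) := by ring
          _ ≤ 10 ^ L := Nat.pow_le_pow_right (by norm_num) hm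
          _ = 1 * 10 ^ L := (one_mul _).symm
          _ ≤ d * 10 ^ L := Nat.mul_le_mul_right _ hd1
      omega
    rw [min_eq_left hles, Nat.card_Icc, Nat.add_mul, one_mul]
    omega
  rw [Finset.sum_congr rfl hmid]
  have hminL : min ((d + 1) * 10 ^ L - 1) i = i := min_eq_right (by omega)
  rw [hminL, Nat.card_Icc]
  have hgeom := nine_mul_geom L
  have hdiv : (10 ^ L - 1) / 9 = ∑ m ∈ Finset.range L, 10 ^ m := by omega
  rw [hkL]
  simp only [Nat.add_sub_cancel]
  rw [hdiv]
  have hdL : 1 ≤ d * 10 ^ L := Nat.mul_pos hd1 hpL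
  have heta : ((Finset.range L).sum (HPow.hPow 10) : ℕ) = ∑ m ∈ Finset.range L, 10 ^ m := rfl
  omega
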